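/- Let M : X → X* be symmetric, elliptic on V = ker C, and C : X → P* bounded surjective onto a reflexive space P*. Then the saddle point system Mx + C*p = -q'(0)-term, Cx = -c has a unique solution (x,p), and x coincides with the unique minimizer of the quadratic q over the affine set {x : Cx + c = 0}. -/

import Mathlib

set_option synthInstance.maxHeartbeats 1000000
set_option maxHeartbeats 1000000

open Submodule RealInnerProductSpace


theorem repr_lemma
    {X Pspace : Type*}
    [NormedAddCommGroup X] [InnerProductSpace ℝ X] [CompleteSpace X]
    [NormedAddCommGroup Pspace] [InnerProductSpace ℝ Pspace] [CompleteSpace Pspace]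
    (C : X →L[ℝ] (Pspace →L[ℝ] ℝ)) (hCsurj : Function.Surjective C)
    (φ : X →L[ℝ] ℝ) (hφ : ∀ v : X, C v = 0 → φ v = 0) :
    ∃ p : Pspace, ∀ v : X, φ v = C v p := by
  set V : Submodule ℝ X := LinearMap.ker (C : X →ₗ[ℝ] (Pspace →L[ℝ] ℝ)) with hV
  have hVclosed : IsClosed (V : Set X) := ContinuousLinearMap.isClosed_ker C
  have : CompleteSpace V := hVclosed.completeSpace_coe
  set W : Submodule ℝ X := Vᗮ with hW
  have hWclosed : IsClosed (W : Set X) := V.isClosed_orthogonal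
  have : CompleteSpace W := hWclosed.completeSpace_coe
  set D : W →L[ℝ] (Pspace →L[ℝ] ℝ) := C.comp W.subtypeL with hD
  have hker : LinearMap.ker (D : W →ₗ[ℝ] (Pspace →L[ℝ] ℝ)) = ⊥ := by
    rw [LinearMap.ker_eq_bot']
    intro w hw
    have h1 : (w : X) ∈ V := by
      simpa [hV, LinearMap.mem_ker, hD] using hw
    have h2 : (w : X) ∈ W := w.2
    have h3 : ⟪(w : X), (w : X)⟫ = 0 := h2 (w : X) h1
    ext
    exact inner_self_eq_zero.mp h3
  have hrange : LinearMap.range (D : W →ₗ[ℝ] (Pspace →L[ℝ] ℝ)) = ⊤ := by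
    rw [LinearMap.range_eq_top]
    intro g
    obtain ⟨x, hx⟩ := hCsurj g
    have hx1 : x - (orthogonalProjection V x : X) ∈ W :=
      sub_starProjection_mem_orthogonal x
    refine ⟨⟨x - (orthogonalProjection V x : X), hx1⟩, ?_⟩
    have hmem : ((orthogonalProjection V x : X)) ∈ V := (orthogonalProjection V x).2
    have hC0 : C ((orthogonalProjection V x : X)) = 0 := hmem
    simp [hD, map_sub, hC0, hx, -Submodule.coe_orthogonalProjectionOnto_apply]
  set e := ContinuousLinearEquiv.ofBijective D hker hrange with he
  set ψ : (Pspace →L[ℝ] ℝ) →L[ℝ] ℝ :=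
    φ.comp (W.subtypeL.comp (e.symm : (Pspace →L[ℝ] ℝ) →L[ℝ] W)) with hψ
  -- build the element p via Riesz on Pspace
  set k : Pspace →ₗ[ℝ] ℝ :=
    { toFun := fun u => ψ (InnerProductSpace.toDual ℝ Pspace u)
      map_add' := by intro a b; simp
      map_smul' := by intro r a; simp }
    with hk
  have hkcont : ∃ Cb : ℝ, ∀ u : Pspace, ‖k u‖ ≤ Cb * ‖u‖ := by
    refine ⟨‖ψ‖, fun u => ?_⟩
    calc ‖ψ (InnerProductSpace.toDual ℝ Pspace u)‖
        ≤ ‖ψ‖ * ‖InnerProductSpace.toDual ℝ Pspace u‖ := ψ.le_opNorm _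
      _ = ‖ψ‖ * ‖u‖ := by rw [LinearIsometryEquiv.norm_map]
  obtain ⟨Cb, hCb⟩ := hkcont
  set kc : Pspace →L[ℝ] ℝ := LinearMap.mkContinuousOfExistsBound k ⟨Cb, hCb⟩ with hkc
  set p : Pspace := (InnerProductSpace.toDual ℝ Pspace).symm kc with hp
  have hpsi : ∀ g : Pspace →L[ℝ] ℝ, ψ g = g p := by
    intro g
    set u := (InnerProductSpace.toDual ℝ Pspace).symm g with hu
    have hgu : InnerProductSpace.toDual ℝ Pspace u = g := by
      simp [hu]
    have h1 : ψ g = k u := by rw [← hgu]; rfl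
    have h2 : ⟪p, u⟫ = kc u := InnerProductSpace.toDual_symm_apply
    have h3 : g p = ⟪u, p⟫ := by rw [← hgu]; simp [InnerProductSpace.toDual_apply_apply]
    rw [h1, h3, real_inner_comm, h2]; rfl
  refine ⟨p, fun v => ?_⟩
  set w : X := v - (orthogonalProjection V v : X) with hw2
  have hwW : w ∈ W := sub_starProjection_mem_orthogonal v
  have hmem : ((orthogonalProjection V v : X)) ∈ V := (orthogonalProjection V v).2
  have hφv : φ v = φ w := by
    have h0 : φ ((orthogonalProjection V v : X)) = 0 := hφ _ hmem
    simp [hw2, map_sub, h0, -Submodule.coe_orthogonalProjectionOnto_apply]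
  have hCv : C v = C w := by
    have h0 : C ((orthogonalProjection V v : X)) = 0 := hmem
    simp [hw2, map_sub, h0, -Submodule.coe_orthogonalProjectionOnto_apply]
  have heww : e ⟨w, hwW⟩ = C w := by
    show (ContinuousLinearEquiv.ofBijective D hker hrange) ⟨w, hwW⟩ = C w
    rw [congrFun (ContinuousLinearEquiv.coeFn_ofBijective D hker hrange) (⟨w, hwW⟩ : W)]
    rfl
  have hψCv : ψ (C v) = φ w := by
    rw [hCv, ← heww]
    simp [hψ]
  rw [hφv, ← hψCv, hpsi]

theorem exist_lemma
    {X Pspace : Type*}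
    [NormedAddCommGroup X] [InnerProductSpace ℝ X] [CompleteSpace X]
    [NormedAddCommGroup Pspace] [InnerProductSpace ℝ Pspace] [CompleteSpace Pspace]
    (M : X →L[ℝ] (X →L[ℝ] ℝ))
    (C : X →L[ℝ] (Pspace →L[ℝ] ℝ)) (hCsurj : Function.Surjective C)
    (α : ℝ) (hα : 0 < α)
    (hell : ∀ v : X, C v = 0 → α * ‖v‖ ^ 2 ≤ M v v)
    (s : X →L[ℝ] ℝ) (c : Pspace →L[ℝ] ℝ) :
    ∃ z : X × Pspace,
      (∀ v : X, M z.1 v + C v z.2 + s v = 0) ∧ C z.1 + c = 0 := by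
  obtain ⟨x₀, hx₀⟩ := hCsurj (-c)
  set V : Submodule ℝ X := LinearMap.ker (C : X →ₗ[ℝ] (Pspace →L[ℝ] ℝ)) with hV
  have hVclosed : IsClosed (V : Set X) := ContinuousLinearMap.isClosed_ker C
  have : CompleteSpace V := hVclosed.completeSpace_coe
  have hmemC : ∀ u : V, C (u : X) = 0 := fun u => u.2
  set B : V →L[ℝ] V →L[ℝ] ℝ := M.bilinearComp V.subtypeL V.subtypeL with hB
  have hBapp : ∀ u w : V, B u w = M (u : X) (w : X) := fun u w => rfl
  have hcoer : IsCoercive B := by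
    refine ⟨α, hα, fun u => ?_⟩
    have := hell (u : X) (hmemC u)
    rw [hBapp]
    calc α * ‖u‖ * ‖u‖ = α * ‖(u : X)‖ ^ 2 := by
          rw [Submodule.norm_coe]; ring
      _ ≤ M (u : X) (u : X) := this
  set f : V →L[ℝ] ℝ := -((M x₀).comp V.subtypeL + s.comp V.subtypeL) with hf
  set y : V := (InnerProductSpace.toDual ℝ V).symm f with hy
  set u : V := hcoer.continuousLinearEquivOfBilin.symm y with hu
  have hBu : ∀ w : V, B u w = f w := by
    intro w
    have h1 : ⟪hcoer.continuousLinearEquivOfBilin u, w⟫ = B u w :=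
      hcoer.continuousLinearEquivOfBilin_apply u w
    have h2 : hcoer.continuousLinearEquivOfBilin u = y := by
      simp [hu]
    have h3 : ⟪y, w⟫ = f w := InnerProductSpace.toDual_symm_apply
    rw [← h1, h2, h3]
  set x : X := x₀ + u with hx
  have hkerzero : ∀ w : X, C w = 0 → M x w + s w = 0 := by
    intro w hwC
    have hwV : w ∈ V := hwC
    have := hBu ⟨w, hwV⟩
    rw [hBapp] at this
    have hf' : f ⟨w, hwV⟩ = -(M x₀ w + s w) := by simp [hf]
    have hMx : M x w = M x₀ w + M (u : X) w := by
      simp [hx, map_add]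
    rw [hf'] at this
    rw [hMx]
    linarith [this]
  set φ : X →L[ℝ] ℝ := -(M x + s) with hφ
  have hφ0 : ∀ v : X, C v = 0 → φ v = 0 := by
    intro v hv
    have := hkerzero v hv
    simp [hφ]
    linarith
  obtain ⟨p, hpp⟩ := repr_lemma C hCsurj φ hφ0
  refine ⟨(x, p), fun v => ?_, ?_⟩
  · have := hpp v
    simp [hφ] at this
    linarith
  · have hCu : C (u : X) = 0 := hmemC u
    show C x + c = 0
    rw [hx, map_add, hCu, hx₀]
    abel
/-- For `M` symmetric, elliptic on `ker C`, and `C` bounded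
surjective, the saddle point system `Mx + C*p + s = 0`, `Cx + c = 0` has a
unique solution `(x,p)`, and its `x`-component is the unique minimizer of the
quadratic `q(x) = ½⟨Mx,x⟩ + ⟨s,x⟩` over `{x : Cx + c = 0}`. -/
theorem stmt16
    {X Pspace : Type*}
    [NormedAddCommGroup X] [InnerProductSpace ℝ X] [CompleteSpace X]
    [NormedAddCommGroup Pspace] [InnerProductSpace ℝ Pspace] [CompleteSpace Pspace]
    (M : X →L[ℝ] (X →L[ℝ] ℝ)) (hMsymm : ∀ x y, M x y = M y x)
    (C : X →L[ℝ] (Pspace →L[ℝ] ℝ)) (hCsurj : Function.Surjective C)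
    (α : ℝ) (hα : 0 < α)
    (hell : ∀ v : X, C v = 0 → α * ‖v‖ ^ 2 ≤ M v v)
    (s : X →L[ℝ] ℝ) (c : Pspace →L[ℝ] ℝ) :
    (∃! z : X × Pspace,
      (∀ v : X, M z.1 v + C v z.2 + s v = 0) ∧ C z.1 + c = 0) ∧
    (∀ z : X × Pspace,
      ((∀ v : X, M z.1 v + C v z.2 + s v = 0) ∧ C z.1 + c = 0) →
      (∀ x : X, C x + c = 0 →
        (1 / 2) * M z.1 z.1 + s z.1 ≤ (1 / 2) * M x x + s x) ∧
      (∀ x : X, C x + c = 0 →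
        (1 / 2) * M x x + s x ≤ (1 / 2) * M z.1 z.1 + s z.1 → x = z.1)) := by
  -- key computation: for a solution z and feasible x, with d = x - z.1,
  -- q x - q z.1 = (1/2) M d d ≥ (α/2)‖d‖²
  have key : ∀ z : X × Pspace,
      ((∀ v : X, M z.1 v + C v z.2 + s v = 0) ∧ C z.1 + c = 0) →
      ∀ x : X, C x + c = 0 →
      ((1 / 2) * M x x + s x) - ((1 / 2) * M z.1 z.1 + s z.1)
        = (1 / 2) * M (x - z.1) (x - z.1) ∧ C (x - z.1) = 0 := by
    intro z ⟨hz1, hz2⟩ x hx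
    have hCd : C (x - z.1) = 0 := by
      rw [map_sub]
      have h1 : C x = -c := by
        have := hx; rwa [add_eq_zero_iff_eq_neg] at this
      have h2 : C z.1 = -c := by
        have := hz2; rwa [add_eq_zero_iff_eq_neg] at this
      rw [h1, h2]; abel
    refine ⟨?_, hCd⟩
    set d := x - z.1 with hd
    have hxd : x = z.1 + d := by rw [hd]; abel
    have heq : M z.1 d + s d = 0 := by
      have := hz1 d
      rw [hCd] at this
      simpa using this
    have hMsd : M d z.1 = M z.1 d := hMsymm d z.1
    rw [hxd]
    simp only [map_add, ContinuousLinearMap.add_apply]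
    ring_nf
    nlinarith [heq, hMsd]
  constructor
  · obtain ⟨z, hz⟩ := exist_lemma M C hCsurj α hα hell s c
    refine ⟨z, hz, ?_⟩
    rintro z' ⟨hz'1, hz'2⟩
    -- uniqueness
    have hCd : C (z'.1 - z.1) = 0 := (key z hz z'.1 hz'2).2
    set d := z'.1 - z.1 with hd
    have hsub : ∀ v : X, M d v + C v (z'.2 - z.2) = 0 := by
      intro v
      have h1 := hz'1 v
      have h2 := hz.1 v
      have : M z'.1 v - M z.1 v + (C v z'.2 - C v z.2) = 0 := by linarith
      simpa [hd, map_sub] using this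
    have hd0 : d = 0 := by
      have h1 := hsub d
      rw [hCd] at h1
      simp at h1
      have h2 := hell d hCd
      rw [h1] at h2
      have : ‖d‖ ^ 2 ≤ 0 := by nlinarith
      have : ‖d‖ = 0 := by nlinarith [sq_nonneg ‖d‖, norm_nonneg d]
      exact norm_eq_zero.mp this
    have hx : z'.1 = z.1 := by
      have : z'.1 - z.1 = 0 := hd0
      exact sub_eq_zero.mp this
    have hp : z'.2 = z.2 := by
      have hCv : ∀ v : X, C v (z'.2 - z.2) = 0 := by
        intro v
        have := hsub v
        rw [hd0] at this
        simpa using this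
      have hall : ∀ g : Pspace →L[ℝ] ℝ, g (z'.2 - z.2) = 0 := by
        intro g
        obtain ⟨v, hv⟩ := hCsurj g
        rw [← hv]; exact hCv v
      have := hall (InnerProductSpace.toDual ℝ Pspace (z'.2 - z.2))
      rw [InnerProductSpace.toDual_apply_apply] at this
      have := inner_self_eq_zero.mp this
      exact sub_eq_zero.mp this
    exact Prod.ext hx hp
  · intro z hz
    constructor
    · intro x hx
      obtain ⟨hq, hCd⟩ := key z hz x hx
      have h1 := hell (x - z.1) hCd
      nlinarith [sq_nonneg ‖x - z.1‖]
    · intro x hx hle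
      obtain ⟨hq, hCd⟩ := key z hz x hx
      have h1 := hell (x - z.1) hCd
      have : ‖x - z.1‖ ^ 2 ≤ 0 := by nlinarith
      have : ‖x - z.1‖ = 0 := by nlinarith [sq_nonneg ‖x - z.1‖, norm_nonneg (x - z.1)]
      have : x - z.1 = 0 := norm_eq_zero.mp this
      exact sub_eq_zero.mp this
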